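/- A quantum operation E is translationally covariant with respect to L if and only if it commutes with every mode projector: E ∘ P^(ω) = P^(ω) ∘ E for all ω ∈ Ω (where we also set P^(ω)∘E and E∘P^(ω) matching mode decompositions between input and output). Equivalently, whenever E(ρ) = σ, then E(P^(ω)(ρ)) = P^(ω)(σ) for all ω. -/

import Mathlib

open Matrix


/-- The observable `L = Σ_l λ_l Π_l` built from spectral projectors. -/
noncomputable def Lof {n k : ℕ} (Pr : Fin k → Matrix (Fin n) (Fin n) ℂ)
    (lam : Fin k → ℝ) : Matrix (Fin n) (Fin n) ℂ :=
  ∑ l, (lam l : ℂ) • Pr l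

/-- The mode-`ω` projector `P^(ω)(A) = Σ_{λ_{l'} − λ_l = ω} Π_l A Π_{l'}`. -/
noncomputable def Pmode {n k : ℕ} (Pr : Fin k → Matrix (Fin n) (Fin n) ℂ)
    (lam : Fin k → ℝ) (ω : ℝ) (A : Matrix (Fin n) (Fin n) ℂ) :
    Matrix (Fin n) (Fin n) ℂ :=
  ∑ l, ∑ l', if lam l' - lam l = ω then Pr l * A * Pr l' else 0

attribute [local instance] Matrix.linftyOpNormedRing Matrix.linftyOpNormedAlgebra

/-- The algebra hom `v ↦ ∑ v l • Pr l` from `Fin k → ℂ` to matrices. -/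
noncomputable def phiOf {n k : ℕ} (Pr : Fin k → Matrix (Fin n) (Fin n) ℂ)
    (horth : ∀ l l', Pr l * Pr l' = if l = l' then Pr l else 0)
    (hsum : ∑ l, Pr l = 1) : (Fin k → ℂ) →ₐ[ℂ] Matrix (Fin n) (Fin n) ℂ where
  toFun v := ∑ l, v l • Pr l
  map_one' := by simp [hsum]
  map_mul' v w := by
    rw [Finset.sum_mul]
    simp_rw [Finset.mul_sum, smul_mul_assoc, mul_smul_comm, horth, smul_ite, smul_zero,
      Finset.sum_ite_eq, Finset.mem_univ, if_true, smul_smul, Pi.mul_apply]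
  map_zero' := by simp
  map_add' v w := by simp [add_smul, Finset.sum_add_distrib]
  commutes' c := by
    simp [Algebra.algebraMap_eq_smul_one, ← Finset.smul_sum, hsum]

theorem expL {n k : ℕ} (Pr : Fin k → Matrix (Fin n) (Fin n) ℂ)
    (horth : ∀ l l', Pr l * Pr l' = if l = l' then Pr l else 0)
    (hsum : ∑ l, Pr l = 1) (lam : Fin k → ℝ) (c : ℂ) :
    NormedSpace.exp (c • Lof Pr lam) = ∑ l, Complex.exp (c * lam l) • Pr l := by
  have hL : c • Lof Pr lam = phiOf Pr horth hsum (fun l => c * lam l) := by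
    simp only [Lof, phiOf, AlgHom.coe_mk, RingHom.coe_mk, MonoidHom.coe_mk, OneHom.coe_mk,
      Finset.smul_sum, smul_smul]
  rw [hL]
  have := NormedSpace.map_exp (phiOf Pr horth hsum)
      (LinearMap.continuous_of_finiteDimensional (phiOf Pr horth hsum).toLinearMap) (fun l => c * lam l)
  refine Eq.trans this.symm ?_
  rw [Pi.exp_def]
  simp [phiOf, ← Complex.exp_eq_exp_ℂ]

/-- The mode set: all differences of eigenvalues. -/
noncomputable def Omof {k : ℕ} (lam : Fin k → ℝ) : Finset ℝ :=
  Finset.image (fun p : Fin k × Fin k => lam p.2 - lam p.1) Finset.univ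

noncomputable def Pmode' {n k : ℕ} (Pr : Fin k → Matrix (Fin n) (Fin n) ℂ)
    (lam : Fin k → ℝ) (ω : ℝ) (A : Matrix (Fin n) (Fin n) ℂ) :
    Matrix (Fin n) (Fin n) ℂ :=
  ∑ l, ∑ l', if lam l' - lam l = ω then Pr l * A * Pr l' else 0

theorem Pmode'_not_mem {n k : ℕ} (Pr : Fin k → Matrix (Fin n) (Fin n) ℂ)
    (lam : Fin k → ℝ) {ω : ℝ} (hω : ω ∉ Omof lam) (A : Matrix (Fin n) (Fin n) ℂ) :
    Pmode' Pr lam ω A = 0 := by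
  unfold Pmode'
  rw [Finset.sum_eq_zero]
  intro l _
  rw [Finset.sum_eq_zero]
  intro l' _
  rw [if_neg]
  intro h
  exact hω (Finset.mem_image.2 ⟨(l, l'), Finset.mem_univ _, h⟩)

theorem group_modes {n k : ℕ} (Pr : Fin k → Matrix (Fin n) (Fin n) ℂ)
    (lam : Fin k → ℝ) (g : ℝ → ℂ) (B : Matrix (Fin n) (Fin n) ℂ) :
    ∑ l, ∑ l', g (lam l' - lam l) • (Pr l * B * Pr l') =
      ∑ ω ∈ Omof lam, g ω • Pmode' Pr lam ω B := by
  unfold Pmode'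
  simp_rw [Finset.smul_sum, smul_ite, smul_zero]
  conv_rhs => rw [Finset.sum_comm]
  refine Finset.sum_congr rfl fun l _ => ?_
  conv_rhs => rw [Finset.sum_comm]
  refine Finset.sum_congr rfl fun l' _ => ?_
  have hmem : lam l' - lam l ∈ Omof lam :=
    Finset.mem_image.2 ⟨(l, l'), Finset.mem_univ _, rfl⟩
  rw [Finset.sum_ite_eq (Omof lam) (lam l' - lam l)
    (fun ω : ℝ => g ω • (Pr l * B * Pr l')), if_pos hmem]

theorem Ux_eq {n k : ℕ} (Pr : Fin k → Matrix (Fin n) (Fin n) ℂ)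
    (horth : ∀ l l', Pr l * Pr l' = if l = l' then Pr l else 0)
    (hsum : ∑ l, Pr l = 1) (lam : Fin k → ℝ) (x : ℝ) (B : Matrix (Fin n) (Fin n) ℂ) :
    NormedSpace.exp ((-(Complex.I * (x : ℂ))) • Lof Pr lam) * B *
        NormedSpace.exp ((Complex.I * (x : ℂ)) • Lof Pr lam) =
      ∑ ω ∈ Omof lam, Complex.exp (Complex.I * x * ω) • Pmode' Pr lam ω B := by
  rw [expL Pr horth hsum lam, expL Pr horth hsum lam, ← group_modes Pr lam
    (fun ω => Complex.exp (Complex.I * x * ω)) B]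
  rw [Finset.sum_mul, Finset.mul_sum]
  simp_rw [Finset.sum_mul, smul_mul_assoc, mul_smul_comm, smul_smul]
  rw [Finset.sum_comm]
  refine Finset.sum_congr rfl fun l _ => Finset.sum_congr rfl fun l' _ => ?_
  rw [mul_comm (Complex.exp _), ← Complex.exp_add]
  congr 2
  push_cast
  ring

/-- The character `x ↦ exp(I x ω)` as a monoid hom from `Multiplicative ℝ`. -/
noncomputable def chiOf (ω : ℝ) : Multiplicative ℝ →* ℂ where
  toFun x := Complex.exp (Complex.I * (Multiplicative.toAdd x : ℝ) * ω)
  map_one' := by simp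
  map_mul' a b := by
    simp only [toAdd_mul, ← Complex.exp_add]
    push_cast
    ring_nf

theorem chiOf_injective : Function.Injective chiOf := by
  intro ω ω' h
  by_contra hne
  have hx := DFunLike.congr_fun h (Multiplicative.ofAdd (Real.pi / (ω - ω')))
  simp only [chiOf, MonoidHom.coe_mk, OneHom.coe_mk, toAdd_ofAdd, Complex.ofReal_div] at hx
  push_cast at hx
  have hsub : ω - ω' ≠ 0 := sub_ne_zero.2 hne
  have h1 : Complex.exp (Complex.I * (Real.pi / (ω - ω')) * ω -
      Complex.I * (Real.pi / (ω - ω')) * ω') = 1 := by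
    rw [Complex.exp_sub, hx, div_self (Complex.exp_ne_zero _)]
  have h2 : (Complex.I * (Real.pi / (ω - ω')) * ω -
      Complex.I * (Real.pi / (ω - ω')) * ω') = Real.pi * Complex.I := by
    have : ((ω : ℂ) - ω') ≠ 0 := by
      simpa using (sub_ne_zero.2 (fun hc : (ω:ℂ) = ω' => hne (by exact_mod_cast hc)))
    field_simp
  rw [h2, Complex.exp_pi_mul_I] at h1
  norm_num at h1

theorem char_indep (Ω : Finset ℝ) (c : ℝ → ℂ)
    (h : ∀ x : ℝ, ∑ ω ∈ Ω, Complex.exp (Complex.I * x * ω) * c ω = 0) :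
    ∀ ω ∈ Ω, c ω = 0 := by
  have li : LinearIndependent ℂ (fun ω : ℝ => ((chiOf ω : Multiplicative ℝ → ℂ))) :=
    (linearIndependent_monoidHom (Multiplicative ℝ) ℂ).comp chiOf chiOf_injective
  refine linearIndependent_iff'.1 li Ω c ?_
  funext x
  simpa [chiOf, Finset.sum_apply, mul_comm] using h (Multiplicative.toAdd x)

/-- A linear map `E` is translationally covariant with respect to `L` if and only if it
commutes with every mode projector: `E ∘ P^(ω) = P^(ω) ∘ E` for all `ω`; equivalently,
the mode-`ω` component of the input is mapped to the mode-`ω` component of the output. -/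
theorem translationCovariant_iff_preserves_modes {n k : ℕ}
    (Pr : Fin k → Matrix (Fin n) (Fin n) ℂ)
    (hherm : ∀ l, (Pr l).IsHermitian)
    (horth : ∀ l l', Pr l * Pr l' = if l = l' then Pr l else 0)
    (hsum : ∑ l, Pr l = 1)
    (lam : Fin k → ℝ) (hdist : Function.Injective lam)
    (E : Matrix (Fin n) (Fin n) ℂ →ₗ[ℂ] Matrix (Fin n) (Fin n) ℂ) :
    (∀ (x : ℝ) (A : Matrix (Fin n) (Fin n) ℂ),
      NormedSpace.exp ((-(Complex.I * (x : ℂ))) • Lof Pr lam) * E A *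
          NormedSpace.exp ((Complex.I * (x : ℂ)) • Lof Pr lam) =
        E (NormedSpace.exp ((-(Complex.I * (x : ℂ))) • Lof Pr lam) * A *
            NormedSpace.exp ((Complex.I * (x : ℂ)) • Lof Pr lam))) ↔
    (∀ (ω : ℝ) (A : Matrix (Fin n) (Fin n) ℂ),
      E (Pmode Pr lam ω A) = Pmode Pr lam ω (E A)) := by
  have hPm : ∀ (ω : ℝ) (A : Matrix (Fin n) (Fin n) ℂ),
      Pmode Pr lam ω A = Pmode' Pr lam ω A := fun _ _ => rfl
  constructor
  · intro h ω A
    have key : ∀ x : ℝ, ∑ ω' ∈ Omof lam, Complex.exp (Complex.I * x * ω') •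
        (E (Pmode' Pr lam ω' A) - Pmode' Pr lam ω' (E A)) = 0 := by
      intro x
      have hx := h x A
      rw [Ux_eq Pr horth hsum lam x (E A), Ux_eq Pr horth hsum lam x A, map_sum] at hx
      simp_rw [LinearMap.map_smul] at hx
      simp [smul_sub, Finset.sum_sub_distrib, hx]
    have key2 : ∀ ω' ∈ Omof lam,
        E (Pmode' Pr lam ω' A) - Pmode' Pr lam ω' (E A) = 0 := by
      intro ω' hω'
      ext i j
      refine char_indep (Omof lam)
        (fun ω'' => (E (Pmode' Pr lam ω'' A) - Pmode' Pr lam ω'' (E A)) i j) ?_ ω' hω'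
      intro x
      have hk := congrFun (congrFun (key x) i) j
      simpa [Matrix.sum_apply, Matrix.smul_apply, smul_eq_mul, mul_comm] using hk
    by_cases hω : ω ∈ Omof lam
    · have h0 := key2 ω hω
      rw [hPm, hPm]
      exact sub_eq_zero.1 h0
    · rw [hPm, hPm, Pmode'_not_mem Pr lam hω, Pmode'_not_mem Pr lam hω, map_zero]
  · intro h x A
    rw [Ux_eq Pr horth hsum lam x (E A), Ux_eq Pr horth hsum lam x A, map_sum]
    simp_rw [LinearMap.map_smul]
    refine Finset.sum_congr rfl fun ω _ => ?_
    rw [← hPm, ← hPm, h ω A]
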